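/- Let Q be the probability measure on ℝ given by the mixture Q = (1/2)·δ₀ + (1/2)·P, where δ₀ is the point mass at 0 and P is the measure with density x ↦ 1/(π·x·(1 + (log x)²)) on (0, ∞) with respect to Lebesgue measure. For β ≤ 0, let Z(β) := ∫ exp(β·x) dQ(x) and let Q_β be the probability measure with density x ↦ exp(β·x)/Z(β) with respect to Q. Then the Kullback–Leibler divergence satisfies D(Q_β ∥ Q) ≤ log 2 for every β ≤ 0. -/

import Mathlib

open MeasureTheory
open scoped ENNReal

/-- The exponentiated Cauchy distribution: the measure with density
`x ↦ 1/(π·x·(1+(log x)²))` on `(0, ∞)` with respect to Lebesgue measure. -/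
noncomputable def expCauchy : Measure ℝ :=
  volume.withDensity fun x : ℝ =>
    if 0 < x then ENNReal.ofReal (1 / (Real.pi * x * (1 + Real.log x ^ 2))) else 0

/-- `Q = (1/2)·δ₀ + (1/2)·(exponentiated Cauchy)`. -/
noncomputable def Qmix : Measure ℝ :=
  (1 / 2 : ℝ≥0∞) • Measure.dirac (0 : ℝ) + (1 / 2 : ℝ≥0∞) • expCauchy

/-- The partition function `Z(β) = ∫ exp(β·x) dQ(x)`. -/
noncomputable def Zmix (β : ℝ) : ℝ := ∫ x, Real.exp (β * x) ∂Qmix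

/-- The element of the exponential family based on `Q` with canonical parameter `β`:
the measure with density `x ↦ exp(β·x)/Z(β)` with respect to `Q`. -/
noncomputable def Qexp (β : ℝ) : Measure ℝ :=
  Qmix.withDensity fun x : ℝ => ENNReal.ofReal (Real.exp (β * x) / Zmix β)

lemma Qmix_ae_nonneg : ∀ᵐ x ∂Qmix, (0:ℝ) ≤ x := by
  rw [ae_iff]
  have hs : {x : ℝ | ¬ (0:ℝ) ≤ x} = Set.Iio 0 := by ext x; simp [not_le]
  rw [hs]
  have h1 : expCauchy (Set.Iio 0) = 0 := by
    rw [expCauchy, withDensity_apply _ measurableSet_Iio]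
    rw [setLIntegral_congr_fun measurableSet_Iio (fun x hx => by
      simp only [Set.mem_Iio] at hx
      rw [if_neg (by linarith)])]
    simp
  have h2 : Measure.dirac (0:ℝ) (Set.Iio 0) = 0 := by
    simp [Measure.dirac_apply' _ measurableSet_Iio]
  simp [Qmix, Measure.add_apply, Measure.smul_apply, h1, h2]

/-- for all `β ≤ 0`, the Kullback–Leibler divergence
`D(Q_β ∥ Q) = ∫ log(dQ_β/dQ) dQ_β = ∫ log(exp(β·x)/Z(β)) dQ_β(x)` is at most `log 2`
(i.e. at most 1 bit). -/
theorem kl_divergence_le_log_two (β : ℝ) (hβ : β ≤ 0) :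
    ∫ x, Real.log (Real.exp (β * x) / Zmix β) ∂(Qexp β) ≤ Real.log 2 := by
  have hlog2 : (0:ℝ) ≤ Real.log 2 := Real.log_nonneg one_le_two
  have hZ0 : 0 ≤ Zmix β := integral_nonneg fun x => (Real.exp_pos _).le
  rcases hZ0.eq_or_lt with hZ | hZ
  · -- Z = 0 : the measure Qexp β is zero
    have hzero : Qexp β = 0 := by
      rw [Qexp, ← hZ]
      simp [div_zero]
    rw [hzero, integral_zero_measure]
    exact hlog2
  · -- Z > 0
    have hInt : Integrable (fun x => Real.exp (β * x)) Qmix := by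
      by_contra h
      rw [Zmix, integral_undef h] at hZ
      exact lt_irrefl _ hZ
    have hQeq : Qmix = (1/2 : ℝ≥0∞) • Measure.dirac (0:ℝ) + (1/2:ℝ≥0∞) • expCauchy := rfl
    have h1 : Integrable (fun x => Real.exp (β * x))
        ((1/2 : ℝ≥0∞) • Measure.dirac (0:ℝ)) :=
      hInt.mono_measure (by rw [hQeq]; exact le_add_of_nonneg_right bot_le)
    have h2 : Integrable (fun x => Real.exp (β * x)) ((1/2 : ℝ≥0∞) • expCauchy) :=
      hInt.mono_measure (by rw [hQeq]; exact le_add_of_nonneg_left bot_le)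
    have hZsplit : Zmix β = (1/2) * Real.exp (β * 0)
        + (1/2) * ∫ x, Real.exp (β * x) ∂expCauchy := by
      rw [Zmix, hQeq, integral_add_measure h1 h2, integral_smul_measure,
        integral_smul_measure, integral_dirac]
      norm_num
    have hZhalf : (1/2 : ℝ) ≤ Zmix β := by
      have := integral_nonneg (μ := expCauchy) (f := fun x => Real.exp (β*x)) fun x => (Real.exp_pos (β*x)).le
      rw [hZsplit]
      simp only [mul_zero, Real.exp_zero]
      nlinarith
    have huniv : Qexp β Set.univ = 1 := by
      rw [Qexp, withDensity_apply _ MeasurableSet.univ, Measure.restrict_univ,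
        ← ofReal_integral_eq_lintegral_ofReal (hInt.div_const _)
          (ae_of_all _ fun x => div_nonneg (Real.exp_pos _).le hZ0),
        integral_div]
      rw [show (∫ a, Real.exp (β * a) ∂Qmix) = Zmix β from rfl,
        div_self (ne_of_gt hZ)]
      simp
    have hprob : IsProbabilityMeasure (Qexp β) := ⟨huniv⟩
    have haebnd : ∀ᵐ x ∂(Qexp β),
        Real.log (Real.exp (β * x) / Zmix β) ≤ Real.log 2 := by
      have hac : Qexp β ≪ Qmix := withDensity_absolutelyContinuous _ _
      have hx0 : ∀ᵐ x ∂(Qexp β), (0:ℝ) ≤ x := hac.ae_le Qmix_ae_nonneg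
      filter_upwards [hx0] with x hx
      have hexp : Real.exp (β * x) ≤ 1 :=
        Real.exp_le_one_iff.mpr (mul_nonpos_of_nonpos_of_nonneg hβ hx)
      have harg : Real.exp (β * x) / Zmix β ≤ 2 := by
        rw [div_le_iff₀ hZ]
        nlinarith
      have hargpos : 0 < Real.exp (β * x) / Zmix β := div_pos (Real.exp_pos _) hZ
      exact Real.log_le_log hargpos harg
    by_cases hIf : Integrable (fun x => Real.log (Real.exp (β * x) / Zmix β)) (Qexp β)
    · calc ∫ x, Real.log (Real.exp (β * x) / Zmix β) ∂(Qexp β)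
          ≤ ∫ _, Real.log 2 ∂(Qexp β) :=
            integral_mono_ae hIf (integrable_const _) haebnd
        _ = Real.log 2 := by simp
    · rw [integral_undef hIf]
      exact hlog2
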